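/- R is a free module over ℂ[t_1,…,t_n], and the canonical classes {p_w : w ∈ S_n} form a ℂ[t_1,…,t_n]-module basis of R. -/

import Mathlib

open MvPolynomial Equiv Finset

noncomputable section

/-- The polynomial ring ℂ[t₁,…,tₙ]. -/
abbrev Pol (n : ℕ) : Type := MvPolynomial (Fin n) ℂ

/-- The action of a permutation `w` on polynomials by the substitution `tᵢ ↦ t_{w(i)}`. -/
def pact {n : ℕ} (w : Perm (Fin n)) (f : Pol n) : Pol n := rename ⇑w f

/-- The GKM condition defining `R ⊆ ∏_{v ∈ Sₙ} ℂ[t₁,…,tₙ]`: for every `v` and every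
transposition `(i j)` with `i < j`, the difference `p(v) − p((i j)v)` is divisible by
`tᵢ − tⱼ`. -/
def GKM (n : ℕ) (p : Perm (Fin n) → Pol n) : Prop :=
  ∀ (v : Perm (Fin n)) (i j : Fin n), i < j →
    (X i - X j : Pol n) ∣ (p v - p (Equiv.swap i j * v))

/-- The length of a permutation: its number of inversions. -/
def len {n : ℕ} (w : Perm (Fin n)) : ℕ :=
  (Finset.univ.filter fun q : Fin n × Fin n => q.1 < q.2 ∧ w q.2 < w q.1).card

/-- Bruhat order: the partial order generated by `u < (i j) u` whenever `ℓ(u) < ℓ((i j)u)`. -/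
def bruhatLE {n : ℕ} : Perm (Fin n) → Perm (Fin n) → Prop :=
  Relation.ReflTransGen
    (fun u v => (∃ i j : Fin n, i < j ∧ v = Equiv.swap i j * u) ∧ len u < len v)

/-- `p` is the canonical class (equivariant Schubert class) of `w`:
(i) each component is homogeneous of degree `ℓ(w)`; (ii) `p(v) = 0` unless `v ≥ w` in
Bruhat order; (iii) `p(w) = ∏ (tᵢ − tⱼ)` over pairs `i < j` with `ℓ((i j)w) < ℓ(w)`;
and `p` satisfies the GKM conditions. -/
def IsCanonical {n : ℕ} (w : Perm (Fin n)) (p : Perm (Fin n) → Pol n) : Prop :=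
  GKM n p ∧
  (∀ v, (p v).IsHomogeneous (len w)) ∧
  (∀ v, ¬ bruhatLE w v → p v = 0) ∧
  p w = ∏ q ∈ Finset.univ.filter
      (fun q : Fin n × Fin n => q.1 < q.2 ∧ len (Equiv.swap q.1 q.2 * w) < len w),
      (X q.1 - X q.2 : Pol n)

/-- The simple transposition `sᵢ = (i, i+1)`. -/
def sT (n i : ℕ) (h : i + 1 < n) : Perm (Fin n) :=
  Equiv.swap ⟨i, Nat.lt_of_succ_lt h⟩ ⟨i + 1, h⟩

/-- The dot (left) action: `(w·p)(v) = w(p(w⁻¹ v))`. -/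
def dot {n : ℕ} (w : Perm (Fin n)) (p : Perm (Fin n) → Pol n) : Perm (Fin n) → Pol n :=
  fun v => pact w (p (w⁻¹ * v))

/-- The star (right) action: `(p * w)(v) = p(vw)`. -/
def starAct {n : ℕ} (p : Perm (Fin n) → Pol n) (w : Perm (Fin n)) :
    Perm (Fin n) → Pol n :=
  fun v => p (v * w)

/-- `R` as a `ℂ[t₁,…,tₙ]`-submodule of the product. -/
def gkmSubmodule (n : ℕ) : Submodule (Pol n) (Perm (Fin n) → Pol n) where
  carrier := {p | GKM n p}
  add_mem' := by
    intro a b ha hb v i j hij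
    have h := dvd_add (ha v i j hij) (hb v i j hij)
    simpa [Pi.add_apply, add_sub_add_comm] using h
  zero_mem' := by
    intro v i j hij
    simp
  smul_mem' := by
    intro c p hp v i j hij
    have h := (hp v i j hij).mul_left c
    simpa [Pi.smul_apply, smul_eq_mul, mul_sub] using h

/-- The maximal ideal `𝔪 = (t₁,…,tₙ) ⊆ ℂ[t₁,…,tₙ]`. -/
def mIdeal (n : ℕ) : Ideal (Pol n) := Ideal.span (Set.range (X : Fin n → Pol n))

/-- The submodule `𝔪R`: finite sums of products `c • p` with `c ∈ 𝔪` and `p ∈ R`. -/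
def mR (n : ℕ) : Submodule (Pol n) (Perm (Fin n) → Pol n) :=
  Submodule.span (Pol n) {q | ∃ c ∈ mIdeal n, ∃ p, GKM n p ∧ q = c • p}

section AuxLemmas

lemma prime_X_sub_X {n : ℕ} {i j : Fin n} (h : i ≠ j) : Prime (X i - X j : Pol n) := by
  cases n with
  | zero => exact absurd i.isLt (by omega)
  | succ m =>
    set k : Fin (m + 1) := Equiv.swap j 0 i with hk
    have hk0 : k ≠ 0 := by
      rcases eq_or_ne i 0 with rfl | hi0
      · rw [hk, Equiv.swap_apply_right]; exact Ne.symm h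
      · rw [hk, Equiv.swap_apply_of_ne_of_ne h hi0]; exact hi0
    let e := (renameEquiv ℂ (Equiv.swap j 0)).trans (finSuccEquiv ℂ m)
    have he : e (X i - X j) = Polynomial.C (X (k.pred hk0)) - Polynomial.X := by
      have h1 : e (X i) = Polynomial.C (X (k.pred hk0)) := by
        simp only [e, AlgEquiv.trans_apply, renameEquiv_apply, rename_X, ← hk]
        rw [show (X k : MvPolynomial (Fin (m + 1)) ℂ) = X ((k.pred hk0).succ) by
          rw [Fin.succ_pred], finSuccEquiv_X_succ]
      have h2 : e (X j) = Polynomial.X := by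
        simp only [e, AlgEquiv.trans_apply, renameEquiv_apply, rename_X,
          Equiv.swap_apply_left]
        exact finSuccEquiv_X_zero
      rw [map_sub, h1, h2]
    have hprime : Prime (e (X i - X j)) := by
      rw [he, ← neg_sub]
      exact (Polynomial.prime_X_sub_C _).neg
    exact (MulEquiv.prime_iff e).mp hprime

lemma not_dvd_X_sub_X {n : ℕ} {i j k l : Fin n} (hij : i < j) (hkl : k < l)
    (hne : (i, j) ≠ (k, l)) : ¬ (X i - X j : Pol n) ∣ (X k - X l) := by
  obtain ⟨x, hx, hxi, hxj⟩ : ∃ x : Fin n, (x = k ∨ x = l) ∧ x ≠ i ∧ x ≠ j := by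
    by_cases hki : k = i
    · subst hki
      refine ⟨l, Or.inr rfl, ne_of_gt hkl, fun hlj => hne ?_⟩
      rw [hlj]
    · by_cases hkj : k = j
      · subst hkj
        exact ⟨l, Or.inr rfl, ne_of_gt (hij.trans hkl), ne_of_gt hkl⟩
      · exact ⟨k, Or.inl rfl, hki, hkj⟩
  rintro ⟨c, hc⟩
  have := congrArg (eval (fun t => if t = x then (1 : ℂ) else 0)) hc
  simp only [map_sub, map_mul, eval_X] at this
  rw [if_neg (Ne.symm hxi), if_neg (Ne.symm hxj)] at this
  rcases hx with rfl | rfl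
  · rw [if_neg (ne_of_gt hkl)] at this
    simpa using this
  · rw [if_neg (ne_of_lt hkl)] at this
    simpa using this

lemma prod_dvd_of_primes {n : ℕ} {β : Type*} [DecidableEq β] {s : Finset β}
    {f : β → Pol n} {a : Pol n}
    (hp : ∀ b ∈ s, Prime (f b)) (hd : ∀ b ∈ s, f b ∣ a)
    (hnd : ∀ b ∈ s, ∀ c ∈ s, b ≠ c → ¬ f b ∣ f c) :
    (∏ b ∈ s, f b) ∣ a := by
  induction s using Finset.induction generalizing a with
  | empty => simp
  | @insert b0 s hb0 ih =>
    obtain ⟨m, hm⟩ := hd b0 (Finset.mem_insert_self _ _)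
    have hms : ∀ c ∈ s, f c ∣ m := by
      intro c hc
      have hca : f c ∣ f b0 * m := by rw [← hm]; exact hd c (Finset.mem_insert_of_mem hc)
      rcases (hp c (Finset.mem_insert_of_mem hc)).2.2 _ _ hca with h | h
      · exact absurd h (hnd c (Finset.mem_insert_of_mem hc) b0 (Finset.mem_insert_self _ _)
          (fun hcb => hb0 (hcb ▸ hc)))
      · exact h
    have hps := ih (fun b hb => hp b (Finset.mem_insert_of_mem hb))
      hms
      (fun b hb c hc hbc => hnd b (Finset.mem_insert_of_mem hb) c (Finset.mem_insert_of_mem hc) hbc)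
    rw [Finset.prod_insert hb0, hm]
    exact mul_dvd_mul_left _ hps

lemma bruhatLE_len {n : ℕ} {u v : Perm (Fin n)} (h : bruhatLE u v) :
    u = v ∨ len u < len v := by
  induction h with
  | refl => exact Or.inl rfl
  | tail _ h2 ih =>
    right
    rcases ih with rfl | hlt
    · exact h2.2
    · exact hlt.trans h2.2

end AuxLemmas

/-- `R` is a free `ℂ[t₁,…,tₙ]`-module and the canonical classes
`{p_w : w ∈ Sₙ}` form a `ℂ[t₁,…,tₙ]`-module basis of `R`. -/
theorem canonical_classes_form_basis (n : ℕ) (hn : 1 ≤ n)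
    (pw : Perm (Fin n) → Perm (Fin n) → Pol n)
    (hpw : ∀ w, IsCanonical w (pw w)) :
    Module.Free (Pol n) (gkmSubmodule n) ∧
    ∃ b : Module.Basis (Perm (Fin n)) (Pol n) (gkmSubmodule n),
      ∀ w, (b w : Perm (Fin n) → Pol n) = pw w := by
  classical
  set P : Perm (Fin n) → gkmSubmodule n := fun w => ⟨pw w, (hpw w).1⟩ with hPdef
  have hPcoe : ∀ w, (P w : Perm (Fin n) → Pol n) = pw w := fun w => rfl
  -- nonvanishing of diagonal entries
  have hpww : ∀ w, pw w w ≠ 0 := by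
    intro w
    rw [(hpw w).2.2.2]
    refine Finset.prod_ne_zero_iff.mpr fun q hq => sub_ne_zero_of_ne ?_
    exact MvPolynomial.X_injective.ne (ne_of_lt (Finset.mem_filter.mp hq).2.1)
  -- linear independence
  have hindep : LinearIndependent (Pol n) P := by
    rw [Fintype.linearIndependent_iff]
    intro g hg
    by_contra hcon
    push_neg at hcon
    obtain ⟨w1, hw1⟩ := hcon
    set S := Finset.univ.filter (fun w : Perm (Fin n) => g w ≠ 0) with hS
    have hSne : S.Nonempty := ⟨w1, Finset.mem_filter.mpr ⟨Finset.mem_univ _, hw1⟩⟩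
    obtain ⟨w0, hw0S, hmin⟩ := S.exists_min_image len hSne
    have hgw0 : g w0 ≠ 0 := (Finset.mem_filter.mp hw0S).2
    have hfun : (∑ w : Perm (Fin n), g w * pw w w0) = 0 := by
      have := congrArg (fun x : gkmSubmodule n => (x : Perm (Fin n) → Pol n) w0) hg
      simpa [P, Finset.sum_apply, smul_eq_mul] using this
    have hsum : (∑ w : Perm (Fin n), g w * pw w w0) = g w0 * pw w0 w0 := by
      refine Finset.sum_eq_single_of_mem w0 (Finset.mem_univ _) ?_
      intro w _ hww0
      by_cases hgw : g w = 0
      · rw [hgw, zero_mul]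
      · rw [(hpw w).2.2.1 w0 ?_, mul_zero]
        intro hbr
        rcases bruhatLE_len hbr with rfl | hlt
        · exact hww0 rfl
        · have := hmin w (Finset.mem_filter.mpr ⟨Finset.mem_univ _, hgw⟩)
          omega
    rw [hsum] at hfun
    exact hgw0 ((mul_eq_zero.mp hfun).resolve_right (hpww w0))
  -- spanning
  have key : ∀ (k : ℕ) (p : Perm (Fin n) → Pol n) (hp : GKM n p),
      (Finset.univ.filter (fun u : Perm (Fin n) => ∃ s, p s ≠ 0 ∧ bruhatLE s u)).card ≤ k →
      (⟨p, hp⟩ : gkmSubmodule n) ∈ Submodule.span (Pol n) (Set.range P) := by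
    intro k
    induction k with
    | zero =>
      intro p hp hcard
      have hp0 : (⟨p, hp⟩ : gkmSubmodule n) = 0 := by
        refine Subtype.ext (funext fun s => ?_)
        by_contra hs
        have hmem : s ∈ Finset.univ.filter
            (fun u : Perm (Fin n) => ∃ s', p s' ≠ 0 ∧ bruhatLE s' u) :=
          Finset.mem_filter.mpr ⟨Finset.mem_univ _, s, hs, Relation.ReflTransGen.refl⟩
        have := Finset.card_pos.mpr ⟨s, hmem⟩
        omega
      rw [hp0]
      exact Submodule.zero_mem _
    | succ k ih =>
      intro p hp hcard
      by_cases hp0 : p = 0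
      · have : (⟨p, hp⟩ : gkmSubmodule n) = 0 := Subtype.ext hp0
        rw [this]
        exact Submodule.zero_mem _
      · set T := Finset.univ.filter (fun s : Perm (Fin n) => p s ≠ 0) with hT
        have hTne : T.Nonempty := by
          obtain ⟨s, hs⟩ := Function.ne_iff.mp hp0
          exact ⟨s, Finset.mem_filter.mpr ⟨Finset.mem_univ _, hs⟩⟩
        obtain ⟨v, hvT, hvmin⟩ := T.exists_min_image len hTne
        have hpv : p v ≠ 0 := (Finset.mem_filter.mp hvT).2
        have hdvd : (∏ q ∈ Finset.univ.filter
            (fun q : Fin n × Fin n => q.1 < q.2 ∧ len (Equiv.swap q.1 q.2 * v) < len v),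
            (X q.1 - X q.2 : Pol n)) ∣ p v := by
          refine prod_dvd_of_primes ?_ ?_ ?_
          · intro q hq
            exact prime_X_sub_X (ne_of_lt (Finset.mem_filter.mp hq).2.1)
          · intro q hq
            obtain ⟨-, hlt, hlen⟩ := Finset.mem_filter.mp hq
            have hz : p (Equiv.swap q.1 q.2 * v) = 0 := by
              by_contra hnz
              have := hvmin _ (Finset.mem_filter.mpr ⟨Finset.mem_univ _, hnz⟩)
              omega
            have hdd := hp v q.1 q.2 hlt
            rwa [hz, sub_zero] at hdd
          · intro q hq q' hq' hne
            refine not_dvd_X_sub_X (Finset.mem_filter.mp hq).2.1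
              (Finset.mem_filter.mp hq').2.1 ?_
            simpa using hne
        obtain ⟨g, hg⟩ := hdvd
        have hpwvv : pw v v = ∏ q ∈ Finset.univ.filter
            (fun q : Fin n × Fin n => q.1 < q.2 ∧ len (Equiv.swap q.1 q.2 * v) < len v),
            (X q.1 - X q.2 : Pol n) := (hpw v).2.2.2
        set p' : Perm (Fin n) → Pol n := p - g • pw v with hp'def
        have hp' : GKM n p' :=
          (gkmSubmodule n).sub_mem hp ((gkmSubmodule n).smul_mem g (hpw v).1)
        have hp'v : p' v = 0 := by
          simp only [hp'def, Pi.sub_apply, Pi.smul_apply, smul_eq_mul, hg, hpwvv]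
          ring
        have hvanish : ∀ s, ¬ bruhatLE v s → p' s = p s := by
          intro s hs
          simp [hp'def, (hpw v).2.2.1 s hs]
        have hsub : (Finset.univ.filter
              (fun u : Perm (Fin n) => ∃ s, p' s ≠ 0 ∧ bruhatLE s u)) ⊆
            (Finset.univ.filter
              (fun u : Perm (Fin n) => ∃ s, p s ≠ 0 ∧ bruhatLE s u)).erase v := by
          intro u hu
          obtain ⟨-, s, hs, hsu⟩ := Finset.mem_filter.mp hu
          by_cases hbr : bruhatLE v s
          · refine Finset.mem_erase.mpr ⟨?_,
              Finset.mem_filter.mpr ⟨Finset.mem_univ _, v, hpv, hbr.trans hsu⟩⟩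
            rintro rfl
            rcases bruhatLE_len hbr with rfl | h1
            · exact hs hp'v
            · rcases bruhatLE_len hsu with rfl | h2
              · omega
              · omega
          · have hps : p s ≠ 0 := by rwa [hvanish s hbr] at hs
            refine Finset.mem_erase.mpr ⟨?_,
              Finset.mem_filter.mpr ⟨Finset.mem_univ _, s, hps, hsu⟩⟩
            rintro rfl
            have hmins := hvmin s (Finset.mem_filter.mpr ⟨Finset.mem_univ _, hps⟩)
            rcases bruhatLE_len hsu with rfl | hlt
            · exact hbr Relation.ReflTransGen.refl
            · omega
        have hcard' : (Finset.univ.filter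
            (fun u : Perm (Fin n) => ∃ s, p' s ≠ 0 ∧ bruhatLE s u)).card ≤ k := by
          have h1 := Finset.card_le_card hsub
          have h2 : v ∈ Finset.univ.filter
              (fun u : Perm (Fin n) => ∃ s, p s ≠ 0 ∧ bruhatLE s u) :=
            Finset.mem_filter.mpr ⟨Finset.mem_univ _, v, hpv, Relation.ReflTransGen.refl⟩
          have h3 := Finset.card_erase_of_mem h2
          have h4 := Finset.card_pos.mpr ⟨v, h2⟩
          omega
        have hmem' := ih p' hp' hcard'
        have heq : (⟨p, hp⟩ : gkmSubmodule n) = ⟨p', hp'⟩ + g • P v := by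
          refine Subtype.ext ?_
          show p = p' + g • pw v
          rw [hp'def]
          abel
        rw [heq]
        exact Submodule.add_mem _ hmem'
          (Submodule.smul_mem _ g (Submodule.subset_span ⟨v, rfl⟩))
  have hspan : ⊤ ≤ Submodule.span (Pol n) (Set.range P) := by
    rintro ⟨p, hp⟩ -
    exact key _ p hp le_rfl
  let b : Module.Basis (Perm (Fin n)) (Pol n) (gkmSubmodule n) := Module.Basis.mk hindep hspan
  refine ⟨Module.Free.of_basis b, b, fun w => ?_⟩
  rw [show b w = P w from Module.Basis.mk_apply hindep hspan w]
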